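/- arXiv:2604.13434 — 2 statements merged into one kernel-verified Lean document; each statement's English description precedes it below -/
import Mathlib

section
/- For a disjoint union G = G₁ ⊔ G₂ of two graphs, the LC orbit of G equals the set of disjoint unions G₁' ⊔ G₂' where G₁' ranges over the LC orbit of G₁ and G₂' over the LC orbit of G₂; consequently max over the orbit of G of the independence number equals the sum of the corresponding maxima for G₁ and G₂. -/
open SimpleGraph

variable {V : Type*}

/-- Local complementation of `G` at `v`: toggle edges between distinct neighbors of `v`. -/
def lc (G : SimpleGraph V) (v : V) : SimpleGraph V where
  Adj x y := x ≠ y ∧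
    (((G.Adj v x ∧ G.Adj v y) ∧ ¬ G.Adj x y) ∨ (¬(G.Adj v x ∧ G.Adj v y) ∧ G.Adj x y))
  symm := ⟨by
    rintro x y ⟨hxy, h⟩
    refine ⟨hxy.symm, ?_⟩
    rcases h with ⟨⟨ha, hb⟩, hc⟩ | ⟨ha, hb⟩
    · exact Or.inl ⟨⟨hb, ha⟩, fun h' => hc h'.symm⟩
    · exact Or.inr ⟨fun h' => ha ⟨h'.2, h'.1⟩, hb.symm⟩⟩
  loopless := ⟨fun x h => h.1 rfl⟩

/-- `lcEquiv G H` iff `H` is obtained from `G` by a finite sequence of local complementations. -/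
def lcEquiv (G H : SimpleGraph V) : Prop := ∃ l : List V, H = l.foldl lc G

/-- `H` is a vertex-minor of `G`: `H` is isomorphic to an induced subgraph of a member of
the LC orbit of `G`. -/
def IsVertexMinor {W : Type*} (H : SimpleGraph W) (G : SimpleGraph V) : Prop :=
  ∃ G' : SimpleGraph V, lcEquiv G G' ∧ ∃ s : Set V, Nonempty (H ≃g G'.induce s)

/-- `s` is an independent set of `G`. -/
def IsIndep (G : SimpleGraph V) (s : Set V) : Prop := s.Pairwise (fun a b => ¬ G.Adj a b)

/-- The independence number of `G`. -/
noncomputable def indepNum (G : SimpleGraph V) : ℕ :=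
  sSup {n | ∃ s : Finset V, IsIndep G ↑s ∧ s.card = n}

/-- Maximum independence number over the LC orbit of `G`. -/
noncomputable def lcBeta (G : SimpleGraph V) : ℕ :=
  sSup {n | ∃ G' : SimpleGraph V, lcEquiv G G' ∧ ∃ s : Finset V, IsIndep G' ↑s ∧ s.card = n}


lemma lc_sum_inl {α β : Type*} (G₁ : SimpleGraph α) (G₂ : SimpleGraph β) (a : α) :
    lc (G₁ ⊕g G₂) (Sum.inl a) = (lc G₁ a) ⊕g G₂ := by
  ext x y
  cases x <;> cases y <;> simp [lc, Sum.inl_injective.ne_iff] <;>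
    exact fun h => G₂.ne_of_adj h

lemma lc_sum_inr {α β : Type*} (G₁ : SimpleGraph α) (G₂ : SimpleGraph β) (b : β) :
    lc (G₁ ⊕g G₂) (Sum.inr b) = G₁ ⊕g (lc G₂ b) := by
  ext x y
  cases x <;> cases y <;> simp [lc, Sum.inr_injective.ne_iff] <;>
    exact fun h => G₁.ne_of_adj h

lemma foldl_sum {α β : Type*} (l : List (α ⊕ β)) :
    ∀ (G₁ : SimpleGraph α) (G₂ : SimpleGraph β),
    ∃ (l₁ : List α) (l₂ : List β), l.foldl lc (G₁ ⊕g G₂) = (l₁.foldl lc G₁) ⊕g (l₂.foldl lc G₂) := by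
  induction l with
  | nil => exact fun G₁ G₂ => ⟨[], [], rfl⟩
  | cons v l ih =>
    intro G₁ G₂
    cases v with
    | inl a =>
      obtain ⟨l₁, l₂, h⟩ := ih (lc G₁ a) G₂
      exact ⟨a :: l₁, l₂, by simpa [lc_sum_inl] using h⟩
    | inr b =>
      obtain ⟨l₁, l₂, h⟩ := ih G₁ (lc G₂ b)
      exact ⟨l₁, b :: l₂, by simpa [lc_sum_inr] using h⟩

lemma foldl_map_inl {α β : Type*} (l : List α) :
    ∀ (G₁ : SimpleGraph α) (G₂ : SimpleGraph β),
    (l.map Sum.inl).foldl lc (G₁ ⊕g G₂) = (l.foldl lc G₁) ⊕g G₂ := by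
  induction l with
  | nil => intros; rfl
  | cons a l ih => intro G₁ G₂; simp [lc_sum_inl, ih]

lemma foldl_map_inr {α β : Type*} (l : List β) :
    ∀ (G₁ : SimpleGraph α) (G₂ : SimpleGraph β),
    (l.map Sum.inr).foldl lc (G₁ ⊕g G₂) = G₁ ⊕g (l.foldl lc G₂) := by
  induction l with
  | nil => intros; rfl
  | cons a l ih => intro G₁ G₂; simp [lc_sum_inr, ih]

lemma orbit_eq {α β : Type*} (G₁ : SimpleGraph α) (G₂ : SimpleGraph β) :
    {H | lcEquiv (G₁ ⊕g G₂) H} =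
      {H | ∃ (H₁ : SimpleGraph α) (H₂ : SimpleGraph β),
        lcEquiv G₁ H₁ ∧ lcEquiv G₂ H₂ ∧ H = H₁ ⊕g H₂} := by
  ext H
  constructor
  · rintro ⟨l, rfl⟩
    obtain ⟨l₁, l₂, h⟩ := foldl_sum l G₁ G₂
    exact ⟨_, _, ⟨l₁, rfl⟩, ⟨l₂, rfl⟩, h⟩
  · rintro ⟨H₁, H₂, ⟨l₁, rfl⟩, ⟨l₂, rfl⟩, rfl⟩
    exact ⟨l₁.map Sum.inl ++ l₂.map Sum.inr, by
      rw [List.foldl_append, foldl_map_inl, foldl_map_inr]⟩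

-- lcBeta facts
lemma betaSet_bdd {V : Type*} [Fintype V] (G : SimpleGraph V) :
    BddAbove {n | ∃ G' : SimpleGraph V, lcEquiv G G' ∧
      ∃ s : Finset V, IsIndep G' ↑s ∧ s.card = n} := by
  refine ⟨Fintype.card V, ?_⟩
  rintro n ⟨G', _, s, _, rfl⟩
  exact s.card_le_univ.trans_eq (by simp)

lemma betaSet_nonempty {V : Type*} (G : SimpleGraph V) :
    Set.Nonempty {n | ∃ G' : SimpleGraph V, lcEquiv G G' ∧
      ∃ s : Finset V, IsIndep G' ↑s ∧ s.card = n} :=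
  ⟨0, G, ⟨[], rfl⟩, ∅, by simp [IsIndep]⟩

lemma indep_sum {α β : Type*} {H₁ : SimpleGraph α} {H₂ : SimpleGraph β}
    {s₁ : Finset α} {s₂ : Finset β} (h₁ : IsIndep H₁ ↑s₁) (h₂ : IsIndep H₂ ↑s₂) :
    IsIndep (H₁ ⊕g H₂) ↑(s₁.disjSum s₂) := by
  rintro x hx y hy hne
  simp only [Finset.mem_coe, Finset.mem_disjSum] at hx hy
  cases x <;> cases y <;> simp_all
  · exact h₁ hx hy (by simpa using hne)
  · exact h₂ hx hy (by simpa using hne)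

lemma indep_toLeft {α β : Type*} {H₁ : SimpleGraph α} {H₂ : SimpleGraph β}
    {s : Finset (α ⊕ β)} (h : IsIndep (H₁ ⊕g H₂) ↑s) : IsIndep H₁ ↑s.toLeft := by
  intro x hx y hy hne
  have := h (show (Sum.inl x : α ⊕ β) ∈ (↑s : Set (α ⊕ β)) by simpa using hx)
    (show (Sum.inl y : α ⊕ β) ∈ (↑s : Set (α ⊕ β)) by simpa using hy) (by simpa using hne)
  simpa using this

lemma indep_toRight {α β : Type*} {H₁ : SimpleGraph α} {H₂ : SimpleGraph β}
    {s : Finset (α ⊕ β)} (h : IsIndep (H₁ ⊕g H₂) ↑s) : IsIndep H₂ ↑s.toRight := by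
  intro x hx y hy hne
  have := h (show (Sum.inr x : α ⊕ β) ∈ (↑s : Set (α ⊕ β)) by simpa using hx)
    (show (Sum.inr y : α ⊕ β) ∈ (↑s : Set (α ⊕ β)) by simpa using hy) (by simpa using hne)
  simpa using this

theorem lc_orbit_sum {α β : Type*} [Fintype α] [Fintype β]
    (G₁ : SimpleGraph α) (G₂ : SimpleGraph β) :
    {H | lcEquiv (G₁ ⊕g G₂) H} =
      {H | ∃ (H₁ : SimpleGraph α) (H₂ : SimpleGraph β),
        lcEquiv G₁ H₁ ∧ lcEquiv G₂ H₂ ∧ H = H₁ ⊕g H₂} ∧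
    lcBeta (G₁ ⊕g G₂) = lcBeta G₁ + lcBeta G₂ := by
  refine ⟨orbit_eq G₁ G₂, le_antisymm ?_ ?_⟩
  · -- ≤
    apply csSup_le (betaSet_nonempty _)
    rintro n ⟨H, hH, s, hs, rfl⟩
    obtain ⟨H₁, H₂, hH₁, hH₂, rfl⟩ := (Set.ext_iff.mp (orbit_eq G₁ G₂) H).mp hH
    rw [← Finset.card_toLeft_add_card_toRight]
    gcongr
    · exact le_csSup (betaSet_bdd G₁) ⟨H₁, hH₁, _, indep_toLeft hs, rfl⟩
    · exact le_csSup (betaSet_bdd G₂) ⟨H₂, hH₂, _, indep_toRight hs, rfl⟩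
  · -- ≥
    obtain ⟨H₁, hH₁, s₁, hs₁, hc₁⟩ := Nat.sSup_mem (betaSet_nonempty G₁) (betaSet_bdd G₁)
    obtain ⟨H₂, hH₂, s₂, hs₂, hc₂⟩ := Nat.sSup_mem (betaSet_nonempty G₂) (betaSet_bdd G₂)
    refine le_csSup (betaSet_bdd _) ⟨H₁ ⊕g H₂, ?_, s₁.disjSum s₂, indep_sum hs₁ hs₂, by
      simp [hc₁, hc₂]; rfl⟩
    exact (Set.ext_iff.mp (orbit_eq G₁ G₂) _).mpr ⟨H₁, H₂, hH₁, hH₂, rfl⟩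
end

section
/- Assuming β(G*) = 3 for a fixed 10-vertex graph G* and β(K_2) = 1, where β is the maximum independence number over the LC orbit: for k ≥ 2 with k−1 = 3q + r (0 ≤ r ≤ 2), there exists a graph on 10q + v(r) vertices (v(0)=0, v(1)=2, v(2)=6) not containing E_k as a vertex-minor, provided there also exists a 6-vertex graph with β = 2; hence R_vm(k) ≥ 10q + v(r) + 1. -/
open SimpleGraph

variable {V : Type*}

/-- The vertex-minor Ramsey number: the least `n` such that every graph on `n` vertices
contains the edgeless graph `E k` as a vertex-minor. -/
noncomputable def Rvm (k : ℕ) : ℕ :=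
  sInf {n | ∀ G : SimpleGraph (Fin n), IsVertexMinor (⊥ : SimpleGraph (Fin k)) G}

section Aux

variable {W : Type*}

lemma lc_adj (G : SimpleGraph V) (v x y : V) :
    (lc G v).Adj x y ↔ x ≠ y ∧
      (((G.Adj v x ∧ G.Adj v y) ∧ ¬ G.Adj x y) ∨ (¬(G.Adj v x ∧ G.Adj v y) ∧ G.Adj x y)) :=
  Iff.rfl

lemma lcEquiv_refl (G : SimpleGraph V) : lcEquiv G G := ⟨[], rfl⟩

lemma lcBeta_le {G : SimpleGraph V} [Fintype V] {m : ℕ}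
    (h : ∀ (G' : SimpleGraph V) (s : Finset V), lcEquiv G G' → IsIndep G' ↑s → s.card ≤ m) :
    lcBeta G ≤ m := by
  apply csSup_le
  · exact ⟨0, G, lcEquiv_refl G, ∅, by simp [IsIndep], by simp⟩
  · rintro n ⟨G', hG', s, hs, rfl⟩
    exact h G' s hG' hs

lemma le_lcBeta {G : SimpleGraph V} [Fintype V] {G' : SimpleGraph V} {s : Finset V}
    (h1 : lcEquiv G G') (h2 : IsIndep G' ↑s) : s.card ≤ lcBeta G := by
  apply le_csSup
  · refine ⟨Fintype.card V, ?_⟩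
    rintro n ⟨G'', _, t, _, rfl⟩
    exact t.card_le_univ
  · exact ⟨G', h1, s, h2, rfl⟩

lemma lc_comap (G : SimpleGraph W) (f : V → W) (hf : Function.Injective f) (a : V) :
    lc (G.comap f) a = (lc G (f a)).comap f := by
  ext x y
  simp only [lc_adj, SimpleGraph.comap_adj, ne_eq, hf.ne_iff]

lemma foldl_lc_comap (f : V → W) (hf : Function.Injective f) :
    ∀ (l : List V) (G : SimpleGraph W),
      l.foldl lc (G.comap f) = (List.foldl lc G (l.map f)).comap f := by
  intro l
  induction l with
  | nil => intro G; rfl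
  | cons a l ih =>
      intro G
      rw [List.foldl_cons, lc_comap G f hf a, ih (lc G (f a)), List.map_cons, List.foldl_cons]

lemma lcBeta_comap_le [Fintype V] [Fintype W] (G : SimpleGraph W) (f : V → W)
    (hf : Function.Injective f) : lcBeta (G.comap f) ≤ lcBeta G := by
  classical
  apply lcBeta_le
  rintro G' s ⟨l, rfl⟩ hs
  rw [foldl_lc_comap f hf l G] at hs
  have hcard : (s.image f).card = s.card := Finset.card_image_of_injective s hf
  rw [← hcard]
  apply le_lcBeta (G := G) ⟨l.map f, rfl⟩
  rintro a ha b hb hne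
  simp only [Finset.coe_image, Set.mem_image, Finset.mem_coe] at ha hb
  obtain ⟨x, hx, rfl⟩ := ha
  obtain ⟨y, hy, rfl⟩ := hb
  have hxy : x ≠ y := fun h => hne (by rw [h])
  exact hs hx hy hxy

/-- Disjoint union of two simple graphs. -/
def sumG (G : SimpleGraph V) (H : SimpleGraph W) : SimpleGraph (V ⊕ W) where
  Adj x y := match x, y with
    | .inl a, .inl b => G.Adj a b
    | .inr a, .inr b => H.Adj a b
    | _, _ => False
  symm := ⟨by rintro (a | a) (b | b) h <;> first | exact h.symm | exact h⟩
  loopless := ⟨by rintro (a | a) h <;> [exact G.loopless.irrefl a h; exact H.loopless.irrefl a h]⟩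

lemma sumG_adj_inl_inl (G : SimpleGraph V) (H : SimpleGraph W) (a b : V) :
    (sumG G H).Adj (.inl a) (.inl b) ↔ G.Adj a b := Iff.rfl

lemma sumG_adj_inr_inr (G : SimpleGraph V) (H : SimpleGraph W) (a b : W) :
    (sumG G H).Adj (.inr a) (.inr b) ↔ H.Adj a b := Iff.rfl

lemma sumG_adj_inl_inr (G : SimpleGraph V) (H : SimpleGraph W) (a : V) (b : W) :
    (sumG G H).Adj (.inl a) (.inr b) ↔ False := Iff.rfl

lemma sumG_adj_inr_inl (G : SimpleGraph V) (H : SimpleGraph W) (a : W) (b : V) :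
    (sumG G H).Adj (.inr a) (.inl b) ↔ False := Iff.rfl

lemma lc_sumG_inl (G : SimpleGraph V) (H : SimpleGraph W) (v : V) :
    lc (sumG G H) (.inl v) = sumG (lc G v) H := by
  ext x y
  rcases x with a | a <;> rcases y with b | b
  · simp only [lc_adj, sumG_adj_inl_inl, ne_eq, Sum.inl.injEq]
  · simp only [lc_adj, sumG_adj_inl_inl, sumG_adj_inl_inr, ne_eq]
    tauto
  · simp only [lc_adj, sumG_adj_inl_inl, sumG_adj_inr_inl, ne_eq]
    tauto
  · simp only [lc_adj, sumG_adj_inr_inr, sumG_adj_inl_inr, sumG_adj_inr_inl, ne_eq,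
      Sum.inr.injEq, false_and, and_false, not_false_iff, true_and, false_or]
    exact and_iff_right_iff_imp.mpr (fun h hab => H.loopless.irrefl b (hab ▸ h))

lemma lc_sumG_inr (G : SimpleGraph V) (H : SimpleGraph W) (v : W) :
    lc (sumG G H) (.inr v) = sumG G (lc H v) := by
  ext x y
  rcases x with a | a <;> rcases y with b | b
  · simp only [lc_adj, sumG_adj_inl_inl, sumG_adj_inr_inl, sumG_adj_inl_inr, ne_eq,
      Sum.inl.injEq, false_and, and_false, not_false_iff, true_and, false_or]
    exact and_iff_right_iff_imp.mpr (fun h hab => G.loopless.irrefl b (hab ▸ h))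
  · simp only [lc_adj, sumG_adj_inr_inr, sumG_adj_inl_inr, ne_eq]
    tauto
  · simp only [lc_adj, sumG_adj_inr_inr, sumG_adj_inr_inl, ne_eq]
    tauto
  · simp only [lc_adj, sumG_adj_inr_inr, ne_eq, Sum.inr.injEq]

lemma foldl_lc_sumG :
    ∀ (l : List (V ⊕ W)) (G : SimpleGraph V) (H : SimpleGraph W),
      ∃ (l₁ : List V) (l₂ : List W),
        l.foldl lc (sumG G H) = sumG (l₁.foldl lc G) (l₂.foldl lc H) := by
  intro l
  induction l with
  | nil => intro G H; exact ⟨[], [], rfl⟩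
  | cons a l ih =>
      intro G H
      rcases a with v | v
      · obtain ⟨l₁, l₂, h⟩ := ih (lc G v) H
        refine ⟨v :: l₁, l₂, ?_⟩
        rw [List.foldl_cons, lc_sumG_inl, h, List.foldl_cons]
      · obtain ⟨l₁, l₂, h⟩ := ih G (lc H v)
        refine ⟨l₁, v :: l₂, ?_⟩
        rw [List.foldl_cons, lc_sumG_inr, h, List.foldl_cons]

lemma lcBeta_sumG_le [Fintype V] [Fintype W] (G : SimpleGraph V) (H : SimpleGraph W) :
    lcBeta (sumG G H) ≤ lcBeta G + lcBeta H := by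
  classical
  apply lcBeta_le
  rintro G' s ⟨l, rfl⟩ hs
  obtain ⟨l₁, l₂, h⟩ := foldl_lc_sumG l G H
  rw [h] at hs
  have h1 : IsIndep (l₁.foldl lc G) ↑s.toLeft := by
    rintro a ha b hb hne hadj
    have ha' : Sum.inl a ∈ s := by simpa using ha
    have hb' : Sum.inl b ∈ s := by simpa using hb
    exact hs ha' hb' (fun hc => hne (Sum.inl.inj hc)) hadj
  have h2 : IsIndep (l₂.foldl lc H) ↑s.toRight := by
    rintro a ha b hb hne hadj
    have ha' : Sum.inr a ∈ s := by simpa using ha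
    have hb' : Sum.inr b ∈ s := by simpa using hb
    exact hs ha' hb' (fun hc => hne (Sum.inr.inj hc)) hadj
  calc s.card = s.toLeft.card + s.toRight.card := by
        rw [Finset.card_toLeft_add_card_toRight]
    _ ≤ lcBeta G + lcBeta H :=
        add_le_add (le_lcBeta ⟨l₁, rfl⟩ h1) (le_lcBeta ⟨l₂, rfl⟩ h2)

/-- Two-color Ramsey numbers. -/
def Rnum : ℕ → ℕ → ℕ
  | 0, _ => 0
  | _ + 1, 0 => 0
  | s + 1, t + 1 => Rnum s (t + 1) + Rnum (s + 1) t + 1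

lemma ramsey_aux : ∀ (n s t : ℕ), s + t = n → ∀ {V : Type*} (G : SimpleGraph V) (A : Finset V),
    Rnum s t ≤ A.card →
    (∃ B ⊆ A, B.card = s ∧ (↑B : Set V).Pairwise G.Adj) ∨
    (∃ B ⊆ A, B.card = t ∧ IsIndep G ↑B) := by
  intro n
  induction n using Nat.strong_induction_on with
  | _ n ih =>
    intro s t hst V G A hA
    classical
    match s, t with
    | 0, t => exact Or.inl ⟨∅, Finset.empty_subset _, rfl, by simp⟩
    | s + 1, 0 => exact Or.inr ⟨∅, Finset.empty_subset _, rfl, by simp [IsIndep]⟩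
    | s + 1, t + 1 =>
      have hRe : Rnum (s + 1) (t + 1) = Rnum s (t + 1) + Rnum (s + 1) t + 1 := by
        rw [Rnum]
      have hApos : 0 < A.card := lt_of_lt_of_le (by omega) hA
      obtain ⟨v, hv⟩ := Finset.card_pos.mp hApos
      set N := (A.erase v).filter (fun x => G.Adj v x) with hN
      set M := (A.erase v).filter (fun x => ¬ G.Adj v x) with hM
      have hcard : N.card + M.card = (A.erase v).card :=
        Finset.card_filter_add_card_filter_not (fun x => G.Adj v x)
      have hAe : (A.erase v).card = A.card - 1 := Finset.card_erase_of_mem hv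
      have hNA : N ⊆ A := (Finset.filter_subset _ _).trans (Finset.erase_subset _ _)
      have hMA : M ⊆ A := (Finset.filter_subset _ _).trans (Finset.erase_subset _ _)
      have hsplit : Rnum s (t + 1) ≤ N.card ∨ Rnum (s + 1) t ≤ M.card := by
        rw [hRe] at hA; omega
      rcases hsplit with hn | hm
      · rcases ih (s + (t + 1)) (by omega) s (t + 1) rfl G N hn with
          ⟨B, hBN, hBc, hBcl⟩ | ⟨B, hB, hBc, hBi⟩
        · refine Or.inl ⟨insert v B, ?_, ?_, ?_⟩
          · exact Finset.insert_subset hv (hBN.trans hNA)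
          · have hvB : v ∉ B := fun hc =>
              (Finset.mem_erase.mp (Finset.mem_of_mem_filter v (hBN hc))).1 rfl
            rw [Finset.card_insert_of_notMem hvB, hBc]
          · haveI hsym : Std.Symm G.Adj := ⟨fun _ _ h => h.symm⟩
            rw [Finset.coe_insert, Set.pairwise_insert_of_symmetric]
            exact ⟨hBcl, fun b hb _ => (Finset.mem_filter.mp (hBN hb)).2⟩
        · exact Or.inr ⟨B, hB.trans hNA, hBc, hBi⟩
      · rcases ih ((s + 1) + t) (by omega) (s + 1) t rfl G M hm with
          ⟨B, hB, hBc, hBcl⟩ | ⟨B, hBM, hBc, hBi⟩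
        · exact Or.inl ⟨B, hB.trans hMA, hBc, hBcl⟩
        · refine Or.inr ⟨insert v B, ?_, ?_, ?_⟩
          · exact Finset.insert_subset hv (hBM.trans hMA)
          · have hvB : v ∉ B := fun hc =>
              (Finset.mem_erase.mp (Finset.mem_of_mem_filter v (hBM hc))).1 rfl
            rw [Finset.card_insert_of_notMem hvB, hBc]
          · haveI hsym : Std.Symm (fun a b => ¬ G.Adj a b) := ⟨fun _ _ h ha => h ha.symm⟩
            rw [IsIndep, Finset.coe_insert, Set.pairwise_insert_of_symmetric]
            exact ⟨hBi, fun b hb _ => (Finset.mem_filter.mp (hBM hb)).2⟩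

/-- Build an iso between the edgeless graph and an induced subgraph on an independent set. -/
lemma iso_bot_induce {n k : ℕ} (G : SimpleGraph (Fin n)) (B : Finset (Fin n)) (hBc : B.card = k)
    (hind : ∀ x ∈ B, ∀ y ∈ B, ¬ G.Adj x y) :
    Nonempty ((⊥ : SimpleGraph (Fin k)) ≃g G.induce ↑B) := by
  refine ⟨⟨((finCongr hBc.symm).trans B.equivFin.symm).trans
    (Equiv.subtypeEquivRight (fun x => Finset.mem_coe.symm)), ?_⟩⟩
  intro a b
  set e := ((finCongr hBc.symm).trans B.equivFin.symm).trans
    (Equiv.subtypeEquivRight (fun x : Fin n => (Finset.mem_coe (s := B)).symm))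
  refine iff_of_false ?_ (by simp)
  intro hadj
  have h1 : ((e a : ↥(↑B : Set (Fin n))) : Fin n) ∈ B := Finset.mem_coe.mp (e a).2
  have h2 : ((e b : ↥(↑B : Set (Fin n))) : Fin n) ∈ B := Finset.mem_coe.mp (e b).2
  exact hind _ h1 _ h2 hadj

lemma mem_Rvm_set (k : ℕ) :
    Rnum (k + 1) k ∈ {n | ∀ G : SimpleGraph (Fin n), IsVertexMinor (⊥ : SimpleGraph (Fin k)) G} := by
  intro G
  have := ramsey_aux ((k + 1) + k) (k + 1) k rfl G Finset.univ (by simp)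
  rcases this with ⟨B, _, hBc, hBcl⟩ | ⟨B, _, hBc, hBi⟩
  · have hBpos : 0 < B.card := by omega
    obtain ⟨v, hvB⟩ := Finset.card_pos.mp hBpos
    refine ⟨lc G v, ⟨[v], rfl⟩, ↑(B.erase v), ?_⟩
    apply iso_bot_induce
    · rw [Finset.card_erase_of_mem hvB, hBc]; omega
    · intro x hx y hy hadj
      obtain ⟨hxv, hxB⟩ := Finset.mem_erase.mp hx
      obtain ⟨hyv, hyB⟩ := Finset.mem_erase.mp hy
      obtain ⟨hne, hc⟩ := hadj
      have hxy : x ≠ y := fun h => hne (by rw [h])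
      have havx : G.Adj v x := hBcl hvB hxB (Ne.symm hxv)
      have havy : G.Adj v y := hBcl hvB hyB (Ne.symm hyv)
      have hxyadj : G.Adj x y := hBcl hxB hyB hxy
      rcases hc with ⟨-, hc⟩ | ⟨hc, -⟩
      · exact hc hxyadj
      · exact hc ⟨havx, havy⟩
  · refine ⟨G, lcEquiv_refl G, ↑B, ?_⟩
    apply iso_bot_induce G B hBc
    intro x hx y hy hadj
    exact hBi hx hy (G.ne_of_adj hadj) hadj

lemma not_vm_of_lcBeta_lt {n k : ℕ} (G : SimpleGraph (Fin n)) (h : lcBeta G < k) :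
    ¬ IsVertexMinor (⊥ : SimpleGraph (Fin k)) G := by
  rintro ⟨G', hG', s, ⟨e⟩⟩
  classical
  let f : Fin k ↪ Fin n :=
    ⟨fun i => ((e i : ↥s) : Fin n), fun i j hij => e.toEquiv.injective (Subtype.ext hij)⟩
  have hcard : (Finset.univ.map f).card = k := by simp
  have hindep : IsIndep G' ↑(Finset.univ.map f) := by
    rintro a ha b hb hne hadj
    simp only [Finset.coe_map, Set.mem_image, Finset.coe_univ, Set.image_univ,
      Set.mem_range] at ha hb
    obtain ⟨i, rfl⟩ := ha
    obtain ⟨j, rfl⟩ := hb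
    have : (G'.induce s).Adj (e i) (e j) := hadj
    exact e.map_rel_iff.mp this
  have := le_lcBeta hG' hindep
  omega

/-- The building construction: `q` copies of a β ≤ 3 block plus one extra block. -/
lemma build (B₃ : SimpleGraph (Fin 10)) (hB₃ : lcBeta B₃ ≤ 3) :
    ∀ (q c b : ℕ) (B : SimpleGraph (Fin c)), lcBeta B ≤ b →
      ∃ G : SimpleGraph (Fin (10 * q + c)), lcBeta G ≤ 3 * q + b := by
  intro q
  induction q with
  | zero =>
      intro c b B hB
      refine ⟨B.comap (finCongr (by omega) : Fin (10 * 0 + c) ≃ Fin c), ?_⟩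
      calc lcBeta (B.comap _) ≤ lcBeta B :=
            lcBeta_comap_le B _ (finCongr (by omega)).injective
        _ ≤ 3 * 0 + b := by omega
  | succ q ih =>
      intro c b B hB
      obtain ⟨G, hG⟩ := ih c b B hB
      have hEq : 10 * (q + 1) + c = 10 + (10 * q + c) := by ring
      refine ⟨(sumG B₃ G).comap
        ((finCongr hEq).trans finSumFinEquiv.symm : Fin (10 * (q + 1) + c) ≃ Fin 10 ⊕ Fin (10 * q + c)), ?_⟩
      calc lcBeta ((sumG B₃ G).comap _) ≤ lcBeta (sumG B₃ G) :=
            lcBeta_comap_le _ _ ((finCongr hEq).trans finSumFinEquiv.symm).injective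
        _ ≤ lcBeta B₃ + lcBeta G := lcBeta_sumG_le B₃ G
        _ ≤ 3 * (q + 1) + b := by omega

lemma lcBeta_bot_zero_le : lcBeta (⊥ : SimpleGraph (Fin 0)) ≤ 0 := by
  apply lcBeta_le
  intro G' s _ _
  simpa using s.card_le_univ

end Aux

theorem explicit_lower_bound
    (B₁ : SimpleGraph (Fin 2)) (hB₁ : lcBeta B₁ = 1)
    (B₂ : SimpleGraph (Fin 6)) (hB₂ : lcBeta B₂ = 2)
    (B₃ : SimpleGraph (Fin 10)) (hB₃ : lcBeta B₃ = 3)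
    (k q r : ℕ) (hk : 2 ≤ k) (hqr : k - 1 = 3 * q + r) (hr : r ≤ 2) :
    (∃ G : SimpleGraph (Fin (10 * q + (if r = 0 then 0 else if r = 1 then 2 else 6))),
        ¬ IsVertexMinor (⊥ : SimpleGraph (Fin k)) G) ∧
    10 * q + (if r = 0 then 0 else if r = 1 then 2 else 6) + 1 ≤ Rvm k := by
  have hB₃' : lcBeta B₃ ≤ 3 := le_of_eq hB₃
  -- get a graph on the right number of vertices with small lcBeta
  have key : ∃ G : SimpleGraph (Fin (10 * q + (if r = 0 then 0 else if r = 1 then 2 else 6))),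
      lcBeta G ≤ 3 * q + r := by
    interval_cases r
    · simpa using build B₃ hB₃' q 0 0 ⊥ lcBeta_bot_zero_le
    · simpa using build B₃ hB₃' q 2 1 B₁ (le_of_eq hB₁)
    · simpa using build B₃ hB₃' q 6 2 B₂ (le_of_eq hB₂)
  obtain ⟨G, hG⟩ := key
  have hGlt : lcBeta G < k := by omega
  constructor
  · exact ⟨G, not_vm_of_lcBeta_lt G hGlt⟩
  · apply le_csInf ⟨Rnum (k + 1) k, mem_Rvm_set k⟩
    intro m hm
    by_contra hc
    push_neg at hc
    have hmle : m ≤ 10 * q + (if r = 0 then 0 else if r = 1 then 2 else 6) := by omega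
    have hinj : Function.Injective (Fin.castLE hmle) := Fin.castLE_injective hmle
    have hlt : lcBeta (G.comap (Fin.castLE hmle)) < k :=
      lt_of_le_of_lt (lcBeta_comap_le G _ hinj) hGlt
    exact not_vm_of_lcBeta_lt _ hlt (hm (G.comap (Fin.castLE hmle)))
end
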